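/- (Main Theorem 4.) Let u₁, u₂ be holomorphic functions of the four complex variables (x, y, t₁, t₂) on an open set, with J := ∂ₓu₁·∂ᵧu₂ − ∂ₓu₂·∂ᵧu₁ ≠ 0. For differential operators P,Q write D(P,Q) := P(u₁)·Q(u₂) − P(u₂)·Q(u₁), so J = D(∂ₓ,∂ᵧ). Suppose the four evolution equations hold: D(∂_{t₁},∂ₓ)/D(∂ᵧ,∂ₓ) = {u₁,u₂;x,y}ₓ, D(∂_{t₁},∂ᵧ)/D(∂ᵧ,∂ₓ) = [u₁,u₂;x,y]ₓ, D(∂_{t₂},∂ₓ)/D(∂ₓ,∂ᵧ) = [u₁,u₂;x,y]ᵧ, D(∂_{t₂},∂ᵧ)/D(∂ₓ,∂ᵧ) = {u₁,u₂;x,y}ᵧ. Define v₁ := {u₁,u₂;x,y}ₓ, w₁ := [u₁,u₂;x,y]ₓ, v₂ := {u₁,u₂;x,y}ᵧ, w₂ := [u₁,u₂;x,y]ᵧ (functions of (x,y,t₁,t₂)). Then: ∂_{t₂}w₁ + ∂_{t₁}v₂ − v₁·∂ᵧv₂ − v₂·∂ₓw₁ + w₁·∂ₓv₂ + w₂·∂ᵧw₁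 = 0 and ∂_{t₁}w₂ + ∂_{t₂}v₁ − v₁·∂ᵧw₂ − v₂·∂ₓv₁ + w₁·∂ₓw₂ + w₂·∂ᵧv₁ = 0. -/

import Mathlib

open Complex

noncomputable section

/-- A point of `ℂ⁴` with coordinates `(x, y, t₁, t₂)`. -/
abbrev Pt : Type := ℂ × ℂ × ℂ × ℂ

/-- Partial derivative in `x`. -/
def pdX (f : Pt → ℂ) (q : Pt) : ℂ :=
  deriv (fun x => f (x, q.2.1, q.2.2.1, q.2.2.2)) q.1

/-- Partial derivative in `y`. -/
def pdY (f : Pt → ℂ) (q : Pt) : ℂ :=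
  deriv (fun y => f (q.1, y, q.2.2.1, q.2.2.2)) q.2.1

/-- Partial derivative in `t₁`. -/
def pdT1 (f : Pt → ℂ) (q : Pt) : ℂ :=
  deriv (fun t => f (q.1, q.2.1, t, q.2.2.2)) q.2.2.1

/-- Partial derivative in `t₂`. -/
def pdT2 (f : Pt → ℂ) (q : Pt) : ℂ :=
  deriv (fun t => f (q.1, q.2.1, q.2.2.1, t)) q.2.2.2

/-- The Jacobian `J(u₁,u₂) = ∂ₓu₁·∂ᵧu₂ − ∂ₓu₂·∂ᵧu₁` in the variables `(x,y)`. -/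
def Jac (u₁ u₂ : Pt → ℂ) (q : Pt) : ℂ :=
  pdX u₁ q * pdY u₂ q - pdX u₂ q * pdY u₁ q

/-- The GL(3) derivative `{u₁,u₂;x,y}ₓ`. -/
def brX (u₁ u₂ : Pt → ℂ) (q : Pt) : ℂ :=
  (pdX u₁ q * pdX (pdX u₂) q - pdX u₂ q * pdX (pdX u₁) q) / Jac u₁ u₂ q

/-- The GL(3) derivative `{u₁,u₂;x,y}ᵧ`. -/
def brY (u₁ u₂ : Pt → ℂ) (q : Pt) : ℂ :=
  -(pdY u₁ q * pdY (pdY u₂) q - pdY u₂ q * pdY (pdY u₁) q) / Jac u₁ u₂ q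

/-- The GL(3) derivative `[u₁,u₂;x,y]ₓ`. -/
def sqX (u₁ u₂ : Pt → ℂ) (q : Pt) : ℂ :=
  ((pdY u₁ q * pdX (pdX u₂) q - pdY u₂ q * pdX (pdX u₁) q)
      + 2 * (pdX u₁ q * pdX (pdY u₂) q - pdX u₂ q * pdX (pdY u₁) q)) / Jac u₁ u₂ q

/-- The GL(3) derivative `[u₁,u₂;x,y]ᵧ`. -/
def sqY (u₁ u₂ : Pt → ℂ) (q : Pt) : ℂ :=
  -((pdX u₁ q * pdY (pdY u₂) q - pdX u₂ q * pdY (pdY u₁) q)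
      + 2 * (pdY u₁ q * pdX (pdY u₂) q - pdY u₂ q * pdX (pdY u₁) q)) / Jac u₁ u₂ q

namespace S18

open Complex Metric Filter Set Topology

def Dd (v : Pt) (f : Pt → ℂ) (q : Pt) : ℂ := fderiv ℂ f q v

/-- Cauchy estimate for the operator norm of `fderiv` via restrictions to complex lines. -/
theorem norm_fderiv_le {Ω : Set Pt} (hΩ : IsOpen Ω) {f : Pt → ℂ} (hf : DifferentiableOn ℂ f Ω)
    {a : Pt} {r M : ℝ} (hr : 0 < r) (hsub : closedBall a (3*r) ⊆ Ω)
    (hM : ∀ z ∈ closedBall a (3*r), ‖f z‖ ≤ M) {y : Pt} (hy : y ∈ closedBall a (2*r)) :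
    ‖fderiv ℂ f y‖ ≤ M / r := by
  have hM0 : 0 ≤ M := le_trans (norm_nonneg _) (hM a (mem_closedBall_self (by positivity)))
  refine ContinuousLinearMap.opNorm_le_bound _ (by positivity) (fun w => ?_)
  rcases eq_or_ne w 0 with rfl | hw
  · simp
  have hwn : 0 < ‖w‖ := norm_pos_iff.mpr hw
  set R := r / ‖w‖ with hRdef
  have hR : 0 < R := by positivity
  have hmem : ∀ z ∈ closedBall (0:ℂ) R, y + z • w ∈ closedBall a (3*r) := by
    intro z hzm
    have hz : ‖z‖ ≤ R := mem_closedBall_zero_iff.mp hzm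
    have : ‖y + z • w - a‖ ≤ ‖y - a‖ + ‖z • w‖ := by
      have : y + z • w - a = (y - a) + z • w := by abel
      rw [this]; exact norm_add_le _ _
    have h2 : ‖z • w‖ ≤ r := by
      rw [norm_smul]
      calc ‖z‖ * ‖w‖ ≤ R * ‖w‖ := mul_le_mul_of_nonneg_right hz (norm_nonneg w)
        _ = r := by rw [hRdef]; exact div_mul_cancel₀ r hwn.ne'
    have h1 : ‖y - a‖ ≤ 2*r := mem_closedBall_iff_norm.mp hy
    exact mem_closedBall_iff_norm.mpr (by linarith)
  set gl : ℂ → ℂ := fun z => f (y + z • w) with hgldef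
  have hglDiff : DifferentiableOn ℂ gl (closedBall 0 R) := by
    intro z hz
    have h1 : DifferentiableAt ℂ f (y + z • w) :=
      hf.differentiableAt (hΩ.mem_nhds (hsub (hmem z hz)))
    have h2 : DifferentiableAt ℂ (fun z : ℂ => y + z • w) z :=
      (differentiableAt_id.smul_const w).const_add y
    exact (h1.comp z h2).differentiableWithinAt
  have hdc : DiffContOnCl ℂ gl (ball (0:ℂ) R) :=
    DifferentiableOn.diffContOnCl (hglDiff.mono closure_ball_subset_closedBall)
  have hC : ∀ z ∈ sphere (0:ℂ) R, ‖gl z‖ ≤ M := by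
    intro z hz
    exact hM _ (hmem z (sphere_subset_closedBall hz))
  have hest := Complex.norm_deriv_le_of_forall_mem_sphere_norm_le hR hdc hC
  have hgl0 : HasDerivAt gl (fderiv ℂ f y w) 0 := by
    have h1 : DifferentiableAt ℂ f (y + (0:ℂ) • w) :=
      hf.differentiableAt (hΩ.mem_nhds (hsub (hmem 0 (mem_closedBall_self hR.le))))
    have h2 : HasDerivAt (fun z : ℂ => y + z • w) w 0 := by
      simpa using ((hasDerivAt_id (0:ℂ)).smul_const w).const_add y
    have := h1.hasFDerivAt.comp_hasDerivAt 0 h2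
    simp only [zero_smul, add_zero] at this
    exact this
  rw [hgl0.deriv] at hest
  calc ‖fderiv ℂ f y w‖ ≤ M / R := hest
    _ = M / r * ‖w‖ := by rw [hRdef]; field_simp

/-- Core SCV lemma: a directional derivative of a holomorphic function is holomorphic. -/
theorem keydir_at {Ω : Set Pt} (hΩ : IsOpen Ω) {f : Pt → ℂ} (hf : DifferentiableOn ℂ f Ω)
    (v : Pt) {a : Pt} (ha : a ∈ Ω) : DifferentiableAt ℂ (Dd v f) a := by
  rcases eq_or_ne v 0 with rfl | hv
  · have hz : Dd (0 : Pt) f = fun _ => (0:ℂ) := by funext q; simp [Dd]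
    rw [hz]; exact differentiableAt_const 0
  obtain ⟨ε, hε, hball⟩ := Metric.isOpen_iff.mp hΩ a ha
  set r := ε / 4 with hrdef
  have hr : 0 < r := by positivity
  have hsub : closedBall a (3*r) ⊆ Ω := fun z hz =>
    hball (lt_of_le_of_lt (mem_closedBall.mp hz) (by rw [hrdef]; linarith))
  obtain ⟨M, hM⟩ := (isCompact_closedBall a (3*r)).exists_bound_of_continuousOn
      (hf.continuousOn.mono hsub)
  have hM0 : 0 ≤ M := le_trans (norm_nonneg _) (hM a (mem_closedBall_self (by positivity)))
  have hvn : 0 < ‖v‖ := norm_pos_iff.mpr hv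
  set ρ := r / ‖v‖ with hρdef
  have hρ : 0 < ρ := by positivity
  set c : ℝ → ℂ := fun θ => circleMap 0 ρ θ with hcdef
  have hcnorm : ∀ θ, ‖c θ‖ = ρ := by
    intro θ; rw [hcdef]; simpa [Real.norm_eq_abs, abs_of_pos hρ] using norm_circleMap_zero ρ θ
  have hcne : ∀ θ, c θ ≠ 0 := fun θ => by
    intro h0; have := hcnorm θ; rw [h0] at this; simp at this; exact hρ.ne' this.symm
  have hcont_c : Continuous c := continuous_circleMap 0 ρ
  have hmem2 : ∀ x ∈ ball a r, ∀ θ : ℝ, x + c θ • v ∈ ball a (2*r) := by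
    intro x hx θ
    have h1 : ‖x - a‖ < r := mem_ball_iff_norm.mp hx
    have h2 : ‖c θ • v‖ = r := by
      rw [norm_smul, hcnorm, hρdef]; field_simp
    have : ‖x + c θ • v - a‖ ≤ ‖x - a‖ + ‖c θ • v‖ := by
      have h3 : x + c θ • v - a = (x - a) + c θ • v := by abel
      rw [h3]; exact norm_add_le _ _
    exact mem_ball_iff_norm.mpr (by linarith)
  have hball2 : ball a (2*r) ⊆ Ω := fun z hz => hsub (by
    exact closedBall_subset_closedBall (by linarith) (ball_subset_closedBall hz))
  set F : Pt → ℝ → ℂ := fun x θ => deriv (circleMap 0 ρ) θ • ((c θ - 0) ^ (-2 : ℤ) • f (x + c θ • v))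
    with hFdef
  -- Step (i): Cauchy representation of the directional derivative
  have hrep : ∀ x ∈ ball a r, Dd v f x = (2 * Real.pi * I : ℂ)⁻¹ • ∫ θ in (0:ℝ)..2*Real.pi, F x θ := by
    intro x hx
    set gl : ℂ → ℂ := fun z => f (x + z • v) with hgldef
    have hglDiff : DifferentiableOn ℂ gl (closedBall 0 ρ) := by
      intro z hz
      have hzn : ‖z‖ ≤ ρ := mem_closedBall_zero_iff.mp hz
      have hmem : x + z • v ∈ ball a (2*r) := by
        have h1 : ‖x - a‖ < r := mem_ball_iff_norm.mp hx
        have h2 : ‖z • v‖ ≤ r := by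
          rw [norm_smul]
          calc ‖z‖ * ‖v‖ ≤ ρ * ‖v‖ := mul_le_mul_of_nonneg_right hzn (norm_nonneg v)
            _ = r := by rw [hρdef]; exact div_mul_cancel₀ r hvn.ne'
        have h3 : ‖x + z • v - a‖ ≤ ‖x - a‖ + ‖z • v‖ := by
          have h4 : x + z • v - a = (x - a) + z • v := by abel
          rw [h4]; exact norm_add_le _ _
        exact mem_ball_iff_norm.mpr (by linarith)
      have h1 : DifferentiableAt ℂ f (x + z • v) :=
        hf.differentiableAt (hΩ.mem_nhds (hball2 hmem))
      have h2 : DifferentiableAt ℂ (fun z : ℂ => x + z • v) z :=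
        (differentiableAt_id.smul_const v).const_add x
      exact (h1.comp z h2).differentiableWithinAt
    have hdc : DiffContOnCl ℂ gl (ball (0:ℂ) ρ) :=
      DifferentiableOn.diffContOnCl (hglDiff.mono closure_ball_subset_closedBall)
    have hd : deriv gl 0 = (2 * Real.pi * I : ℂ)⁻¹ • ∮ z in C(0, ρ), (z - 0) ^ (-2:ℤ) • gl z := by
      have h := hdc.deriv_eq_smul_circleIntegral hρ
      have e : (fun z : ℂ => (z - 0) ^ (-2:ℤ) • gl z) = fun z => (1 / (z - 0) ^ 2) • gl z := by
        funext z; simp [zpow_neg]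
      rw [e, h, smul_smul, inv_mul_cancel₀ (by simp [Real.pi_ne_zero, I_ne_zero]), one_smul]
    have hgl0 : HasDerivAt gl (Dd v f x) 0 := by
      have h1 : DifferentiableAt ℂ f (x + (0:ℂ) • v) := by
        have hxx : x + (0:ℂ) • v = x := by simp
        rw [hxx]
        exact hf.differentiableAt (hΩ.mem_nhds (hball2 (ball_subset_ball (by linarith) hx)))
      have h2 : HasDerivAt (fun z : ℂ => x + z • v) v 0 := by
        simpa using ((hasDerivAt_id (0:ℂ)).smul_const v).const_add x
      have h3 := h1.hasFDerivAt.comp_hasDerivAt 0 h2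
      simp only [zero_smul, add_zero] at h3
      exact h3
    rw [← hgl0.deriv, hd, circleIntegral]
  -- Step (ii): the integral representation is differentiable in the parameter
  have hG : DifferentiableAt ℂ (fun x => ∫ θ in (0:ℝ)..2*Real.pi, F x θ) a := by
    set F' : Pt → ℝ → (Pt →L[ℂ] ℂ) := fun x θ =>
      (deriv (circleMap 0 ρ) θ * (c θ - 0) ^ (-2 : ℤ)) • fderiv ℂ f (x + c θ • v) with hF'def
    have hbound : ∀ θ : ℝ, ∀ x ∈ ball a r, ‖F' x θ‖ ≤ ρ⁻¹ * (M / r) := by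
      intro θ x hx
      have h1 : ‖fderiv ℂ f (x + c θ • v)‖ ≤ M / r :=
        norm_fderiv_le hΩ hf hr hsub hM (ball_subset_closedBall (hmem2 x hx θ))
      have h2 : ‖deriv (circleMap 0 ρ) θ * (c θ - 0) ^ (-2 : ℤ)‖ = ρ⁻¹ := by
        have h5 : ‖circleMap 0 ρ θ‖ = ρ := by
          simpa [Real.norm_eq_abs, abs_of_pos hρ] using norm_circleMap_zero ρ θ
        rw [norm_mul, deriv_circleMap, norm_mul, h5, Complex.norm_I, mul_one]
        simp only [sub_zero, norm_zpow]
        rw [show ‖c θ‖ = ρ from hcnorm θ]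
        rw [zpow_neg, zpow_two, mul_inv, ← mul_assoc, mul_inv_cancel₀ hρ.ne', one_mul]
      rw [hF'def]
      calc ‖(deriv (circleMap 0 ρ) θ * (c θ - 0) ^ (-2 : ℤ)) • fderiv ℂ f (x + c θ • v)‖
          = ‖deriv (circleMap 0 ρ) θ * (c θ - 0) ^ (-2 : ℤ)‖ * ‖fderiv ℂ f (x + c θ • v)‖ :=
            norm_smul _ _
        _ ≤ ρ⁻¹ * (M / r) := by
            rw [h2]; exact mul_le_mul_of_nonneg_left h1 (by positivity)
    have hdiff' : ∀ θ : ℝ, ∀ x ∈ ball a r, HasFDerivAt (fun x => F x θ) (F' x θ) x := by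
      intro θ x hx
      have h1 : DifferentiableAt ℂ f (x + c θ • v) :=
        hf.differentiableAt (hΩ.mem_nhds (hball2 (hmem2 x hx θ)))
      have h2 : HasFDerivAt (fun x : Pt => x + c θ • v)
          (ContinuousLinearMap.id ℂ Pt) x := (hasFDerivAt_id x).add_const _
      have h3 : HasFDerivAt (fun x : Pt => f (x + c θ • v)) (fderiv ℂ f (x + c θ • v)) x := by
        have := h1.hasFDerivAt.comp x h2
        exact this
      have h4 := (h3.const_smul ((c θ - 0) ^ (-2 : ℤ))).const_smul (deriv (circleMap 0 ρ) θ)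
      exact h4.congr_fderiv (by rw [smul_smul])
  -- measurability and integrability
    have hcont_deriv : Continuous (fun θ => deriv (circleMap 0 ρ) θ) := by
      simp only [deriv_circleMap]; exact (continuous_circleMap 0 ρ).mul continuous_const
    have hz2cont : Continuous (fun θ => deriv (circleMap 0 ρ) θ * (c θ - 0) ^ (-2 : ℤ)) := by
      apply hcont_deriv.mul
      exact Continuous.zpow₀ (hcont_c.sub continuous_const) (-2)
        (fun θ => Or.inl (by simpa using hcne θ))
    have hFcont : ∀ x ∈ ball a r, Continuous (fun θ => F x θ) := by
      intro x hx
      rw [hFdef]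
      apply Continuous.smul hcont_deriv
      apply Continuous.smul (Continuous.zpow₀ (hcont_c.sub continuous_const) (-2)
        (fun θ => Or.inl (by simpa using hcne θ)))
      have hpath : Continuous (fun θ => x + c θ • v) :=
        continuous_const.add (hcont_c.smul continuous_const)
      exact (hf.continuousOn.mono hball2).comp_continuous hpath (fun θ => hmem2 x hx θ)
    have har : a ∈ ball a r := mem_ball_self hr
    have hF_meas : ∀ᶠ x in 𝓝 a, MeasureTheory.AEStronglyMeasurable (F x)
        (MeasureTheory.volume.restrict (Set.uIoc (0:ℝ) (2*Real.pi))) := by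
      filter_upwards [isOpen_ball.mem_nhds har] with x hx
      exact (hFcont x hx).aestronglyMeasurable
    have hF_int : IntervalIntegrable (F a) MeasureTheory.volume 0 (2*Real.pi) :=
      (hFcont a har).intervalIntegrable 0 (2*Real.pi)
    have hF'_meas : MeasureTheory.AEStronglyMeasurable (F' a)
        (MeasureTheory.volume.restrict (Set.uIoc (0:ℝ) (2*Real.pi))) := by
      apply MeasureTheory.AEStronglyMeasurable.smul hz2cont.aestronglyMeasurable
      have hpath : Continuous (fun θ => a + c θ • v) :=
        continuous_const.add (hcont_c.smul continuous_const)
      haveI : OpensMeasurableSpace Pt := by infer_instance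
      exact ((measurable_fderiv ℂ f).comp hpath.measurable).aestronglyMeasurable
    obtain ⟨ε', hε', hball'⟩ := Metric.isOpen_iff.mp isOpen_ball a har
    have hder := intervalIntegral.hasFDerivAt_integral_of_dominated_of_fderiv_le
      (F := F) (F' := F') (x₀ := a) (a := (0:ℝ)) (b := 2*Real.pi)
      (bound := fun _ => ρ⁻¹ * (M / r)) (μ := MeasureTheory.volume) (ball_mem_nhds a hε') hF_meas hF_int hF'_meas
      (MeasureTheory.ae_of_all _ (fun θ _ x hx => hbound θ x (hball' hx)))
      intervalIntegrable_const
      (MeasureTheory.ae_of_all _ (fun θ _ x hx => hdiff' θ x (hball' hx)))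
    exact hder.differentiableAt
  have heq : Dd v f =ᶠ[𝓝 a] fun x => (2 * Real.pi * I : ℂ)⁻¹ • ∫ θ in (0:ℝ)..2*Real.pi, F x θ := by
    filter_upwards [isOpen_ball.mem_nhds (mem_ball_self hr)] with x hx
    exact hrep x hx
  exact (Filter.EventuallyEq.differentiableAt_iff heq).mpr
    (by have := hG.const_smul ((2 * Real.pi * I : ℂ)⁻¹); exact this)

def eX : Pt := (1,0,0,0)
def eY : Pt := (0,1,0,0)
def eT1 : Pt := (0,0,1,0)
def eT2 : Pt := (0,0,0,1)

theorem Dd_diffOn {Ω : Set Pt} (hΩ : IsOpen Ω) {f : Pt → ℂ} (hf : DifferentiableOn ℂ f Ω)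
    (v : Pt) : DifferentiableOn ℂ (Dd v f) Ω :=
  fun q hq => (keydir_at hΩ hf v hq).differentiableWithinAt

def pi1 : Pt →L[ℂ] ℂ := ContinuousLinearMap.fst ℂ ℂ (ℂ × ℂ × ℂ)
def pi2 : Pt →L[ℂ] ℂ :=
  (ContinuousLinearMap.fst ℂ ℂ (ℂ × ℂ)).comp (ContinuousLinearMap.snd ℂ ℂ (ℂ × ℂ × ℂ))
def pi3 : Pt →L[ℂ] ℂ :=
  ((ContinuousLinearMap.fst ℂ ℂ ℂ).comp (ContinuousLinearMap.snd ℂ ℂ (ℂ × ℂ))).comp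
    (ContinuousLinearMap.snd ℂ ℂ (ℂ × ℂ × ℂ))
def pi4 : Pt →L[ℂ] ℂ :=
  ((ContinuousLinearMap.snd ℂ ℂ ℂ).comp (ContinuousLinearMap.snd ℂ ℂ (ℂ × ℂ))).comp
    (ContinuousLinearMap.snd ℂ ℂ (ℂ × ℂ × ℂ))

theorem vdecomp (v : Pt) :
    v = v.1 • eX + v.2.1 • eY + v.2.2.1 • eT1 + v.2.2.2 • eT2 := by
  simp [eX, eY, eT1, eT2, Prod.ext_iff]

theorem key_fderiv {Ω : Set Pt} (hΩ : IsOpen Ω) {f : Pt → ℂ} (hf : DifferentiableOn ℂ f Ω)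
    {a : Pt} (ha : a ∈ Ω) : DifferentiableAt ℂ (fun q => fderiv ℂ f q) a := by
  set G : Pt → (Pt →L[ℂ] ℂ) := fun q =>
    pi1.smulRight (Dd eX f q) + pi2.smulRight (Dd eY f q)
      + pi3.smulRight (Dd eT1 f q) + pi4.smulRight (Dd eT2 f q) with hGdef
  have hGdiff : DifferentiableAt ℂ G a := by
    have h1 := keydir_at hΩ hf eX ha
    have h2 := keydir_at hΩ hf eY ha
    have h3 := keydir_at hΩ hf eT1 ha
    have h4 := keydir_at hΩ hf eT2 ha
    exact ((((ContinuousLinearMap.smulRightL ℂ Pt ℂ pi1).differentiableAt.comp a h1).add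
      ((ContinuousLinearMap.smulRightL ℂ Pt ℂ pi2).differentiableAt.comp a h2)).add
      ((ContinuousLinearMap.smulRightL ℂ Pt ℂ pi3).differentiableAt.comp a h3)).add
      ((ContinuousLinearMap.smulRightL ℂ Pt ℂ pi4).differentiableAt.comp a h4)
  have heq : (fun q => fderiv ℂ f q) =ᶠ[𝓝 a] G := by
    filter_upwards [hΩ.mem_nhds ha] with q hq
    refine ContinuousLinearMap.ext fun v => ?_
    calc fderiv ℂ f q v
        = fderiv ℂ f q (v.1 • eX + v.2.1 • eY + v.2.2.1 • eT1 + v.2.2.2 • eT2) := by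
          rw [← vdecomp v]
      _ = v.1 • fderiv ℂ f q eX + v.2.1 • fderiv ℂ f q eY + v.2.2.1 • fderiv ℂ f q eT1
            + v.2.2.2 • fderiv ℂ f q eT2 := by
          simp [map_add, map_smul]
      _ = G q v := by
          simp [hGdef, Dd, pi1, pi2, pi3, pi4, ContinuousLinearMap.smulRight_apply,
            smul_eq_mul]
  exact hGdiff.congr_of_eventuallyEq heq

theorem Dd_symm {Ω : Set Pt} (hΩ : IsOpen Ω) {f : Pt → ℂ} (hf : DifferentiableOn ℂ f Ω)
    {q : Pt} (hq : q ∈ Ω) (v w : Pt) : Dd v (Dd w f) q = Dd w (Dd v f) q := by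
  have hF' : DifferentiableAt ℂ (fun y => fderiv ℂ f y) q := key_fderiv hΩ hf hq
  have hev : ∀ᶠ y in 𝓝 q, HasFDerivAt f (fderiv ℂ f y) y := by
    filter_upwards [hΩ.mem_nhds hq] with y hy using
      (hf.differentiableAt (hΩ.mem_nhds hy)).hasFDerivAt
  have hsymm := second_derivative_symmetric_of_eventually hev hF'.hasFDerivAt v w
  have h1 : ∀ w v : Pt, Dd v (Dd w f) q = (fderiv ℂ (fun y => fderiv ℂ f y) q v) w := by
    intro w v
    unfold Dd
    rw [fderiv_clm_apply hF' (differentiableAt_const w)]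
    simp
  rw [h1, h1, hsymm]

theorem pdX_eq {f : Pt → ℂ} {q : Pt} (hf : DifferentiableAt ℂ f q) : pdX f q = Dd eX f q := by
  have hs : HasDerivAt (fun x : ℂ => ((x, q.2.1, q.2.2.1, q.2.2.2) : Pt)) eX q.1 :=
    HasDerivAt.prodMk (hasDerivAt_id _) (hasDerivAt_const _ _)
  exact (hf.hasFDerivAt.comp_hasDerivAt q.1 hs).deriv

theorem pdY_eq {f : Pt → ℂ} {q : Pt} (hf : DifferentiableAt ℂ f q) : pdY f q = Dd eY f q := by
  have hs : HasDerivAt (fun y : ℂ => ((q.1, y, q.2.2.1, q.2.2.2) : Pt)) eY q.2.1 :=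
    HasDerivAt.prodMk (hasDerivAt_const _ _) (HasDerivAt.prodMk (hasDerivAt_id _) (hasDerivAt_const _ _))
  exact (hf.hasFDerivAt.comp_hasDerivAt q.2.1 hs).deriv

theorem pdT1_eq {f : Pt → ℂ} {q : Pt} (hf : DifferentiableAt ℂ f q) : pdT1 f q = Dd eT1 f q := by
  have hs : HasDerivAt (fun t : ℂ => ((q.1, q.2.1, t, q.2.2.2) : Pt)) eT1 q.2.2.1 :=
    HasDerivAt.prodMk (hasDerivAt_const _ _) (HasDerivAt.prodMk (hasDerivAt_const _ _)
      (HasDerivAt.prodMk (hasDerivAt_id _) (hasDerivAt_const _ _)))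
  exact (hf.hasFDerivAt.comp_hasDerivAt q.2.2.1 hs).deriv

theorem pdT2_eq {f : Pt → ℂ} {q : Pt} (hf : DifferentiableAt ℂ f q) : pdT2 f q = Dd eT2 f q := by
  have hs : HasDerivAt (fun t : ℂ => ((q.1, q.2.1, q.2.2.1, t) : Pt)) eT2 q.2.2.2 :=
    HasDerivAt.prodMk (hasDerivAt_const _ _) (HasDerivAt.prodMk (hasDerivAt_const _ _)
      (HasDerivAt.prodMk (hasDerivAt_const _ _) (hasDerivAt_id _)))
  exact (hf.hasFDerivAt.comp_hasDerivAt q.2.2.2 hs).deriv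

theorem pdX_congr {f g : Pt → ℂ} {q : Pt} (h : f =ᶠ[𝓝 q] g) : pdX f q = pdX g q := by
  apply Filter.EventuallyEq.deriv_eq
  exact h.comp_tendsto ((continuous_id.prodMk continuous_const).tendsto q.1)

theorem pdY_congr {f g : Pt → ℂ} {q : Pt} (h : f =ᶠ[𝓝 q] g) : pdY f q = pdY g q := by
  apply Filter.EventuallyEq.deriv_eq
  exact h.comp_tendsto ((continuous_const.prodMk (continuous_id.prodMk
    continuous_const)).tendsto q.2.1)

theorem pdT1_congr {f g : Pt → ℂ} {q : Pt} (h : f =ᶠ[𝓝 q] g) : pdT1 f q = pdT1 g q := by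
  apply Filter.EventuallyEq.deriv_eq
  exact h.comp_tendsto ((continuous_const.prodMk (continuous_const.prodMk
    (continuous_id.prodMk continuous_const))).tendsto q.2.2.1)

theorem pdT2_congr {f g : Pt → ℂ} {q : Pt} (h : f =ᶠ[𝓝 q] g) : pdT2 f q = pdT2 g q := by
  apply Filter.EventuallyEq.deriv_eq
  exact h.comp_tendsto ((continuous_const.prodMk (continuous_const.prodMk
    (continuous_const.prodMk continuous_id))).tendsto q.2.2.2)

theorem Dd_congr {f g : Pt → ℂ} {q : Pt} (h : f =ᶠ[𝓝 q] g) (v : Pt) : Dd v f q = Dd v g q := by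
  unfold Dd; rw [h.fderiv_eq]

theorem diffAt_div {f g : Pt → ℂ} {q : Pt} (hf : DifferentiableAt ℂ f q)
    (hg : DifferentiableAt ℂ g q) (h0 : g q ≠ 0) :
    DifferentiableAt ℂ (fun p => f p / g p) q := by
  simp only [div_eq_mul_inv]
  exact hf.mul (hg.inv h0)

theorem Dd_mul {f g : Pt → ℂ} {q : Pt} (hf : DifferentiableAt ℂ f q)
    (hg : DifferentiableAt ℂ g q) (v : Pt) :
    Dd v (fun p => f p * g p) q = Dd v f q * g q + f q * Dd v g q := by
  unfold Dd
  rw [fderiv_fun_mul hf hg]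
  simp [smul_eq_mul]
  ring

theorem Dd_sub {f g : Pt → ℂ} {q : Pt} (hf : DifferentiableAt ℂ f q)
    (hg : DifferentiableAt ℂ g q) (v : Pt) :
    Dd v (fun p => f p - g p) q = Dd v f q - Dd v g q := by
  unfold Dd; rw [fderiv_fun_sub hf hg]; rfl

/-- The compatibility computation: cross `t₁`/`t₂` derivatives of a holomorphic function
subject to the two linear evolution flows. -/
theorem compat {Ω : Set Pt} (hΩ : IsOpen Ω) {u V₁ W₁ V₂ W₂ : Pt → ℂ}
    (hu : DifferentiableOn ℂ u Ω) {q : Pt} (hq : q ∈ Ω)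
    (hV₁ : DifferentiableAt ℂ V₁ q) (hW₁ : DifferentiableAt ℂ W₁ q)
    (hV₂ : DifferentiableAt ℂ V₂ q) (hW₂ : DifferentiableAt ℂ W₂ q)
    (h1 : Dd eT1 u =ᶠ[𝓝 q] fun p => V₁ p * Dd eY u p - W₁ p * Dd eX u p)
    (h2 : Dd eT2 u =ᶠ[𝓝 q] fun p => V₂ p * Dd eX u p - W₂ p * Dd eY u p) :
    Dd eX u q * (Dd eT2 W₁ q + Dd eT1 V₂ q - V₁ q * Dd eY V₂ q - V₂ q * Dd eX W₁ q
        + W₁ q * Dd eX V₂ q + W₂ q * Dd eY W₁ q)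
      = Dd eY u q * (Dd eT1 W₂ q + Dd eT2 V₁ q - V₁ q * Dd eY W₂ q - V₂ q * Dd eX V₁ q
        + W₁ q * Dd eX W₂ q + W₂ q * Dd eY V₁ q) := by
  have hXu : DifferentiableAt ℂ (Dd eX u) q := keydir_at hΩ hu eX hq
  have hYu : DifferentiableAt ℂ (Dd eY u) q := keydir_at hΩ hu eY hq
  have hyx : Dd eY (Dd eX u) q = Dd eX (Dd eY u) q := Dd_symm hΩ hu hq eY eX
  have eA : Dd eT2 (Dd eY u) q
      = Dd eY V₂ q * Dd eX u q + V₂ q * Dd eX (Dd eY u) q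
        - (Dd eY W₂ q * Dd eY u q + W₂ q * Dd eY (Dd eY u) q) := by
    calc Dd eT2 (Dd eY u) q = Dd eY (Dd eT2 u) q := Dd_symm hΩ hu hq eT2 eY
      _ = Dd eY (fun p => V₂ p * Dd eX u p - W₂ p * Dd eY u p) q := Dd_congr h2 eY
      _ = Dd eY (fun p => V₂ p * Dd eX u p) q - Dd eY (fun p => W₂ p * Dd eY u p) q :=
          Dd_sub (hV₂.mul hXu) (hW₂.mul hYu) eY
      _ = _ := by rw [Dd_mul hV₂ hXu eY, Dd_mul hW₂ hYu eY, hyx]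
  have eB : Dd eT2 (Dd eX u) q
      = Dd eX V₂ q * Dd eX u q + V₂ q * Dd eX (Dd eX u) q
        - (Dd eX W₂ q * Dd eY u q + W₂ q * Dd eX (Dd eY u) q) := by
    calc Dd eT2 (Dd eX u) q = Dd eX (Dd eT2 u) q := Dd_symm hΩ hu hq eT2 eX
      _ = Dd eX (fun p => V₂ p * Dd eX u p - W₂ p * Dd eY u p) q := Dd_congr h2 eX
      _ = Dd eX (fun p => V₂ p * Dd eX u p) q - Dd eX (fun p => W₂ p * Dd eY u p) q :=
          Dd_sub (hV₂.mul hXu) (hW₂.mul hYu) eX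
      _ = _ := by rw [Dd_mul hV₂ hXu eX, Dd_mul hW₂ hYu eX]
  have eC : Dd eT1 (Dd eX u) q
      = Dd eX V₁ q * Dd eY u q + V₁ q * Dd eX (Dd eY u) q
        - (Dd eX W₁ q * Dd eX u q + W₁ q * Dd eX (Dd eX u) q) := by
    calc Dd eT1 (Dd eX u) q = Dd eX (Dd eT1 u) q := Dd_symm hΩ hu hq eT1 eX
      _ = Dd eX (fun p => V₁ p * Dd eY u p - W₁ p * Dd eX u p) q := Dd_congr h1 eX
      _ = Dd eX (fun p => V₁ p * Dd eY u p) q - Dd eX (fun p => W₁ p * Dd eX u p) q :=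
          Dd_sub (hV₁.mul hYu) (hW₁.mul hXu) eX
      _ = _ := by rw [Dd_mul hV₁ hYu eX, Dd_mul hW₁ hXu eX]
  have eD : Dd eT1 (Dd eY u) q
      = Dd eY V₁ q * Dd eY u q + V₁ q * Dd eY (Dd eY u) q
        - (Dd eY W₁ q * Dd eX u q + W₁ q * Dd eX (Dd eY u) q) := by
    calc Dd eT1 (Dd eY u) q = Dd eY (Dd eT1 u) q := Dd_symm hΩ hu hq eT1 eY
      _ = Dd eY (fun p => V₁ p * Dd eY u p - W₁ p * Dd eX u p) q := Dd_congr h1 eY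
      _ = Dd eY (fun p => V₁ p * Dd eY u p) q - Dd eY (fun p => W₁ p * Dd eX u p) q :=
          Dd_sub (hV₁.mul hYu) (hW₁.mul hXu) eY
      _ = _ := by rw [Dd_mul hV₁ hYu eY, Dd_mul hW₁ hXu eY, hyx]
  have hT1u : DifferentiableAt ℂ (Dd eT1 u) q := keydir_at hΩ hu eT1 hq
  have hT2u : DifferentiableAt ℂ (Dd eT2 u) q := keydir_at hΩ hu eT2 hq
  have lhs_eq : Dd eT2 (Dd eT1 u) q
      = Dd eT2 V₁ q * Dd eY u q + V₁ q * Dd eT2 (Dd eY u) q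
        - (Dd eT2 W₁ q * Dd eX u q + W₁ q * Dd eT2 (Dd eX u) q) := by
    calc Dd eT2 (Dd eT1 u) q
        = Dd eT2 (fun p => V₁ p * Dd eY u p - W₁ p * Dd eX u p) q := Dd_congr h1 eT2
      _ = Dd eT2 (fun p => V₁ p * Dd eY u p) q - Dd eT2 (fun p => W₁ p * Dd eX u p) q :=
          Dd_sub (hV₁.mul hYu) (hW₁.mul hXu) eT2
      _ = _ := by rw [Dd_mul hV₁ hYu eT2, Dd_mul hW₁ hXu eT2]
  have rhs_eq : Dd eT1 (Dd eT2 u) q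
      = Dd eT1 V₂ q * Dd eX u q + V₂ q * Dd eT1 (Dd eX u) q
        - (Dd eT1 W₂ q * Dd eY u q + W₂ q * Dd eT1 (Dd eY u) q) := by
    calc Dd eT1 (Dd eT2 u) q
        = Dd eT1 (fun p => V₂ p * Dd eX u p - W₂ p * Dd eY u p) q := Dd_congr h2 eT1
      _ = Dd eT1 (fun p => V₂ p * Dd eX u p) q - Dd eT1 (fun p => W₂ p * Dd eY u p) q :=
          Dd_sub (hV₂.mul hXu) (hW₂.mul hYu) eT1
      _ = _ := by rw [Dd_mul hV₂ hXu eT1, Dd_mul hW₂ hYu eT1]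
  have m : Dd eT2 (Dd eT1 u) q = Dd eT1 (Dd eT2 u) q := Dd_symm hΩ hu hq eT2 eT1
  rw [eA, eB] at lhs_eq
  rw [eC, eD] at rhs_eq
  linear_combination lhs_eq - rhs_eq - m

end S18

open S18 Filter Topology Set

/-- **Main Theorem 4.** If `(u₁,u₂)` solves the four GL(3)-invariant
evolution equations, then `v₁ = {u₁,u₂;x,y}ₓ`, `w₁ = [u₁,u₂;x,y]ₓ`,
`v₂ = {u₁,u₂;x,y}ᵧ`, `w₂ = [u₁,u₂;x,y]ᵧ` satisfy the two coupled nonlinear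
evolution equations. -/
theorem statement18 (Ω : Set Pt) (hΩ : IsOpen Ω)
    (u₁ u₂ : Pt → ℂ)
    (hu₁ : DifferentiableOn ℂ u₁ Ω) (hu₂ : DifferentiableOn ℂ u₂ Ω)
    (hJ : ∀ q ∈ Ω, Jac u₁ u₂ q ≠ 0)
    (hev₁ : ∀ q ∈ Ω,
      (pdT1 u₁ q * pdX u₂ q - pdT1 u₂ q * pdX u₁ q) /
        (pdY u₁ q * pdX u₂ q - pdY u₂ q * pdX u₁ q) = brX u₁ u₂ q)
    (hev₂ : ∀ q ∈ Ω,
      (pdT1 u₁ q * pdY u₂ q - pdT1 u₂ q * pdY u₁ q) /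
        (pdY u₁ q * pdX u₂ q - pdY u₂ q * pdX u₁ q) = sqX u₁ u₂ q)
    (hev₃ : ∀ q ∈ Ω,
      (pdT2 u₁ q * pdX u₂ q - pdT2 u₂ q * pdX u₁ q) /
        (pdX u₁ q * pdY u₂ q - pdX u₂ q * pdY u₁ q) = sqY u₁ u₂ q)
    (hev₄ : ∀ q ∈ Ω,
      (pdT2 u₁ q * pdY u₂ q - pdT2 u₂ q * pdY u₁ q) /
        (pdX u₁ q * pdY u₂ q - pdX u₂ q * pdY u₁ q) = brY u₁ u₂ q)
    (v₁ w₁ v₂ w₂ : Pt → ℂ)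
    (hv₁ : v₁ = brX u₁ u₂) (hw₁ : w₁ = sqX u₁ u₂)
    (hv₂ : v₂ = brY u₁ u₂) (hw₂ : w₂ = sqY u₁ u₂) :
    ∀ q ∈ Ω,
      (pdT2 w₁ q + pdT1 v₂ q - v₁ q * pdY v₂ q - v₂ q * pdX w₁ q
        + w₁ q * pdX v₂ q + w₂ q * pdY w₁ q = 0) ∧
      (pdT1 w₂ q + pdT2 v₁ q - v₁ q * pdY w₂ q - v₂ q * pdX v₁ q
        + w₁ q * pdX w₂ q + w₂ q * pdY v₁ q = 0) := by

  subst hv₁ hw₁ hv₂ hw₂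
  have du1 : ∀ p ∈ Ω, DifferentiableAt ℂ u₁ p := fun p hp => hu₁.differentiableAt (hΩ.mem_nhds hp)
  have du2 : ∀ p ∈ Ω, DifferentiableAt ℂ u₂ p := fun p hp => hu₂.differentiableAt (hΩ.mem_nhds hp)
  have dx1 : ∀ p ∈ Ω, DifferentiableAt ℂ (Dd eX u₁) p := fun p hp => keydir_at hΩ hu₁ eX hp
  have dy1 : ∀ p ∈ Ω, DifferentiableAt ℂ (Dd eY u₁) p := fun p hp => keydir_at hΩ hu₁ eY hp
  have dx2 : ∀ p ∈ Ω, DifferentiableAt ℂ (Dd eX u₂) p := fun p hp => keydir_at hΩ hu₂ eX hp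
  have dy2 : ∀ p ∈ Ω, DifferentiableAt ℂ (Dd eY u₂) p := fun p hp => keydir_at hΩ hu₂ eY hp
  have dxx1 : ∀ p ∈ Ω, DifferentiableAt ℂ (Dd eX (Dd eX u₁)) p :=
    fun p hp => keydir_at hΩ (Dd_diffOn hΩ hu₁ eX) eX hp
  have dxx2 : ∀ p ∈ Ω, DifferentiableAt ℂ (Dd eX (Dd eX u₂)) p :=
    fun p hp => keydir_at hΩ (Dd_diffOn hΩ hu₂ eX) eX hp
  have dxy1 : ∀ p ∈ Ω, DifferentiableAt ℂ (Dd eX (Dd eY u₁)) p :=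
    fun p hp => keydir_at hΩ (Dd_diffOn hΩ hu₁ eY) eX hp
  have dxy2 : ∀ p ∈ Ω, DifferentiableAt ℂ (Dd eX (Dd eY u₂)) p :=
    fun p hp => keydir_at hΩ (Dd_diffOn hΩ hu₂ eY) eX hp
  have dyy1 : ∀ p ∈ Ω, DifferentiableAt ℂ (Dd eY (Dd eY u₁)) p :=
    fun p hp => keydir_at hΩ (Dd_diffOn hΩ hu₁ eY) eY hp
  have dyy2 : ∀ p ∈ Ω, DifferentiableAt ℂ (Dd eY (Dd eY u₂)) p :=
    fun p hp => keydir_at hΩ (Dd_diffOn hΩ hu₂ eY) eY hp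
  set J' : Pt → ℂ := fun p => Dd eX u₁ p * Dd eY u₂ p - Dd eX u₂ p * Dd eY u₁ p with hJ'def
  set V₁ : Pt → ℂ := fun p =>
    (Dd eX u₁ p * Dd eX (Dd eX u₂) p - Dd eX u₂ p * Dd eX (Dd eX u₁) p) / J' p with hV₁def
  set W₁ : Pt → ℂ := fun p =>
    ((Dd eY u₁ p * Dd eX (Dd eX u₂) p - Dd eY u₂ p * Dd eX (Dd eX u₁) p)
      + 2 * (Dd eX u₁ p * Dd eX (Dd eY u₂) p - Dd eX u₂ p * Dd eX (Dd eY u₁) p)) / J' p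
    with hW₁def
  set V₂ : Pt → ℂ := fun p =>
    -(Dd eY u₁ p * Dd eY (Dd eY u₂) p - Dd eY u₂ p * Dd eY (Dd eY u₁) p) / J' p with hV₂def
  set W₂ : Pt → ℂ := fun p =>
    -((Dd eX u₁ p * Dd eY (Dd eY u₂) p - Dd eX u₂ p * Dd eY (Dd eY u₁) p)
      + 2 * (Dd eY u₁ p * Dd eX (Dd eY u₂) p - Dd eY u₂ p * Dd eX (Dd eY u₁) p)) / J' p
    with hW₂def
  have hJeq : ∀ p ∈ Ω, Jac u₁ u₂ p = J' p := by
    intro p hp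
    simp only [Jac, hJ'def]
    rw [pdX_eq (du1 p hp), pdX_eq (du2 p hp), pdY_eq (du1 p hp), pdY_eq (du2 p hp)]
  have hJne : ∀ p ∈ Ω, J' p ≠ 0 := fun p hp => (hJeq p hp) ▸ hJ p hp
  have dJ' : ∀ p ∈ Ω, DifferentiableAt ℂ J' p := by
    intro p hp
    rw [hJ'def]
    exact ((dx1 p hp).mul (dy2 p hp)).sub ((dx2 p hp).mul (dy1 p hp))
  have pdfirstX : ∀ (u : Pt → ℂ), DifferentiableOn ℂ u Ω → ∀ p ∈ Ω, pdX u =ᶠ[𝓝 p] Dd eX u :=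
    fun u hu p hp => eventuallyEq_of_mem (hΩ.mem_nhds hp)
      (fun z hz => pdX_eq (hu.differentiableAt (hΩ.mem_nhds hz)))
  have pdfirstY : ∀ (u : Pt → ℂ), DifferentiableOn ℂ u Ω → ∀ p ∈ Ω, pdY u =ᶠ[𝓝 p] Dd eY u :=
    fun u hu p hp => eventuallyEq_of_mem (hΩ.mem_nhds hp)
      (fun z hz => pdY_eq (hu.differentiableAt (hΩ.mem_nhds hz)))
  have pdXX : ∀ (u : Pt → ℂ), DifferentiableOn ℂ u Ω → ∀ p ∈ Ω,
      pdX (pdX u) p = Dd eX (Dd eX u) p := fun u hu p hp => by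
    rw [pdX_congr (pdfirstX u hu p hp), pdX_eq (keydir_at hΩ hu eX hp)]
  have pdXY : ∀ (u : Pt → ℂ), DifferentiableOn ℂ u Ω → ∀ p ∈ Ω,
      pdX (pdY u) p = Dd eX (Dd eY u) p := fun u hu p hp => by
    rw [pdX_congr (pdfirstY u hu p hp), pdX_eq (keydir_at hΩ hu eY hp)]
  have pdYY : ∀ (u : Pt → ℂ), DifferentiableOn ℂ u Ω → ∀ p ∈ Ω,
      pdY (pdY u) p = Dd eY (Dd eY u) p := fun u hu p hp => by
    rw [pdY_congr (pdfirstY u hu p hp), pdY_eq (keydir_at hΩ hu eY hp)]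
  have hbrX : ∀ p ∈ Ω, brX u₁ u₂ p = V₁ p := by
    intro p hp
    simp only [brX, hV₁def]
    rw [pdXX u₁ hu₁ p hp, pdXX u₂ hu₂ p hp, pdX_eq (du1 p hp), pdX_eq (du2 p hp), hJeq p hp]
  have hsqX : ∀ p ∈ Ω, sqX u₁ u₂ p = W₁ p := by
    intro p hp
    simp only [sqX, hW₁def]
    rw [pdXX u₁ hu₁ p hp, pdXX u₂ hu₂ p hp, pdXY u₁ hu₁ p hp, pdXY u₂ hu₂ p hp,
      pdX_eq (du1 p hp), pdX_eq (du2 p hp), pdY_eq (du1 p hp), pdY_eq (du2 p hp), hJeq p hp]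
  have hbrY : ∀ p ∈ Ω, brY u₁ u₂ p = V₂ p := by
    intro p hp
    simp only [brY, hV₂def]
    rw [pdYY u₁ hu₁ p hp, pdYY u₂ hu₂ p hp, pdY_eq (du1 p hp), pdY_eq (du2 p hp), hJeq p hp]
  have hsqY : ∀ p ∈ Ω, sqY u₁ u₂ p = W₂ p := by
    intro p hp
    simp only [sqY, hW₂def]
    rw [pdYY u₁ hu₁ p hp, pdYY u₂ hu₂ p hp, pdXY u₁ hu₁ p hp, pdXY u₂ hu₂ p hp,
      pdX_eq (du1 p hp), pdX_eq (du2 p hp), pdY_eq (du1 p hp), pdY_eq (du2 p hp), hJeq p hp]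
  -- the four solved evolution identities
  have hA1 : ∀ p ∈ Ω, Dd eT1 u₁ p = V₁ p * Dd eY u₁ p - W₁ p * Dd eX u₁ p := by
    intro p hp
    have e1 := hev₁ p hp
    have e2 := hev₂ p hp
    rw [hbrX p hp] at e1
    rw [hsqX p hp] at e2
    rw [pdT1_eq (du1 p hp), pdT1_eq (du2 p hp), pdX_eq (du1 p hp), pdX_eq (du2 p hp),
      pdY_eq (du1 p hp), pdY_eq (du2 p hp)] at e1 e2
    have hden : Dd eY u₁ p * Dd eX u₂ p - Dd eY u₂ p * Dd eX u₁ p ≠ 0 := by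
      intro h0
      apply hJne p hp
      simp only [hJ'def]
      linear_combination -h0
    rw [div_eq_iff hden] at e1 e2
    have hkey : J' p * (Dd eT1 u₁ p - (V₁ p * Dd eY u₁ p - W₁ p * Dd eX u₁ p)) = 0 := by
      simp only [hJ'def]
      linear_combination (Dd eX u₁ p) * e2 - (Dd eY u₁ p) * e1
    have := (mul_eq_zero.mp hkey).resolve_left (hJne p hp)
    linear_combination this
  have hA2 : ∀ p ∈ Ω, Dd eT1 u₂ p = V₁ p * Dd eY u₂ p - W₁ p * Dd eX u₂ p := by
    intro p hp
    have e1 := hev₁ p hp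
    have e2 := hev₂ p hp
    rw [hbrX p hp] at e1
    rw [hsqX p hp] at e2
    rw [pdT1_eq (du1 p hp), pdT1_eq (du2 p hp), pdX_eq (du1 p hp), pdX_eq (du2 p hp),
      pdY_eq (du1 p hp), pdY_eq (du2 p hp)] at e1 e2
    have hden : Dd eY u₁ p * Dd eX u₂ p - Dd eY u₂ p * Dd eX u₁ p ≠ 0 := by
      intro h0
      apply hJne p hp
      simp only [hJ'def]
      linear_combination -h0
    rw [div_eq_iff hden] at e1 e2
    have hkey : J' p * (Dd eT1 u₂ p - (V₁ p * Dd eY u₂ p - W₁ p * Dd eX u₂ p)) = 0 := by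
      simp only [hJ'def]
      linear_combination (Dd eX u₂ p) * e2 - (Dd eY u₂ p) * e1
    have := (mul_eq_zero.mp hkey).resolve_left (hJne p hp)
    linear_combination this
  have hA3 : ∀ p ∈ Ω, Dd eT2 u₁ p = V₂ p * Dd eX u₁ p - W₂ p * Dd eY u₁ p := by
    intro p hp
    have e3 := hev₃ p hp
    have e4 := hev₄ p hp
    rw [hsqY p hp] at e3
    rw [hbrY p hp] at e4
    rw [pdT2_eq (du1 p hp), pdT2_eq (du2 p hp), pdX_eq (du1 p hp), pdX_eq (du2 p hp),
      pdY_eq (du1 p hp), pdY_eq (du2 p hp)] at e3 e4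
    have hden : Dd eX u₁ p * Dd eY u₂ p - Dd eX u₂ p * Dd eY u₁ p ≠ 0 := by
      have := hJne p hp
      simp only [hJ'def] at this
      exact this
    rw [div_eq_iff hden] at e3 e4
    have hkey : J' p * (Dd eT2 u₁ p - (V₂ p * Dd eX u₁ p - W₂ p * Dd eY u₁ p)) = 0 := by
      simp only [hJ'def]
      linear_combination (Dd eX u₁ p) * e4 - (Dd eY u₁ p) * e3
    have := (mul_eq_zero.mp hkey).resolve_left (hJne p hp)
    linear_combination this
  have hA4 : ∀ p ∈ Ω, Dd eT2 u₂ p = V₂ p * Dd eX u₂ p - W₂ p * Dd eY u₂ p := by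
    intro p hp
    have e3 := hev₃ p hp
    have e4 := hev₄ p hp
    rw [hsqY p hp] at e3
    rw [hbrY p hp] at e4
    rw [pdT2_eq (du1 p hp), pdT2_eq (du2 p hp), pdX_eq (du1 p hp), pdX_eq (du2 p hp),
      pdY_eq (du1 p hp), pdY_eq (du2 p hp)] at e3 e4
    have hden : Dd eX u₁ p * Dd eY u₂ p - Dd eX u₂ p * Dd eY u₁ p ≠ 0 := by
      have := hJne p hp
      simp only [hJ'def] at this
      exact this
    rw [div_eq_iff hden] at e3 e4
    have hkey : J' p * (Dd eT2 u₂ p - (V₂ p * Dd eX u₂ p - W₂ p * Dd eY u₂ p)) = 0 := by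
      simp only [hJ'def]
      linear_combination (Dd eX u₂ p) * e4 - (Dd eY u₂ p) * e3
    have := (mul_eq_zero.mp hkey).resolve_left (hJne p hp)
    linear_combination this
  intro q hq
  -- differentiability at q of the coefficient functions
  have dV₁q : DifferentiableAt ℂ V₁ q := by
    rw [hV₁def]
    apply diffAt_div _ (dJ' q hq) (hJne q hq)
    exact ((dx1 q hq).mul (dxx2 q hq)).sub ((dx2 q hq).mul (dxx1 q hq))
  have dW₁q : DifferentiableAt ℂ W₁ q := by
    rw [hW₁def]
    apply diffAt_div _ (dJ' q hq) (hJne q hq)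
    exact (((dy1 q hq).mul (dxx2 q hq)).sub ((dy2 q hq).mul (dxx1 q hq))).add
      ((((dx1 q hq).mul (dxy2 q hq)).sub ((dx2 q hq).mul (dxy1 q hq))).const_mul 2)
  have dV₂q : DifferentiableAt ℂ V₂ q := by
    rw [hV₂def]
    apply diffAt_div _ (dJ' q hq) (hJne q hq)
    exact (((dy1 q hq).mul (dyy2 q hq)).sub ((dy2 q hq).mul (dyy1 q hq))).neg
  have dW₂q : DifferentiableAt ℂ W₂ q := by
    rw [hW₂def]
    apply diffAt_div _ (dJ' q hq) (hJne q hq)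
    exact ((((dx1 q hq).mul (dyy2 q hq)).sub ((dx2 q hq).mul (dyy1 q hq))).add
      ((((dy1 q hq).mul (dxy2 q hq)).sub ((dy2 q hq).mul (dxy1 q hq))).const_mul 2)).neg
  -- eventual-equality versions of the evolution identities at q
  have h1u₁ : Dd eT1 u₁ =ᶠ[𝓝 q] fun p => V₁ p * Dd eY u₁ p - W₁ p * Dd eX u₁ p :=
    eventuallyEq_of_mem (hΩ.mem_nhds hq) (fun p hp => hA1 p hp)
  have h1u₂ : Dd eT1 u₂ =ᶠ[𝓝 q] fun p => V₁ p * Dd eY u₂ p - W₁ p * Dd eX u₂ p :=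
    eventuallyEq_of_mem (hΩ.mem_nhds hq) (fun p hp => hA2 p hp)
  have h2u₁ : Dd eT2 u₁ =ᶠ[𝓝 q] fun p => V₂ p * Dd eX u₁ p - W₂ p * Dd eY u₁ p :=
    eventuallyEq_of_mem (hΩ.mem_nhds hq) (fun p hp => hA3 p hp)
  have h2u₂ : Dd eT2 u₂ =ᶠ[𝓝 q] fun p => V₂ p * Dd eX u₂ p - W₂ p * Dd eY u₂ p :=
    eventuallyEq_of_mem (hΩ.mem_nhds hq) (fun p hp => hA4 p hp)
  have cp1 := compat hΩ hu₁ hq dV₁q dW₁q dV₂q dW₂q h1u₁ h2u₁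
  have cp2 := compat hΩ hu₂ hq dV₁q dW₁q dV₂q dW₂q h1u₂ h2u₂
  have hG1 : Dd eT2 W₁ q + Dd eT1 V₂ q - V₁ q * Dd eY V₂ q - V₂ q * Dd eX W₁ q
      + W₁ q * Dd eX V₂ q + W₂ q * Dd eY W₁ q = 0 := by
    have hk : J' q * (Dd eT2 W₁ q + Dd eT1 V₂ q - V₁ q * Dd eY V₂ q - V₂ q * Dd eX W₁ q
        + W₁ q * Dd eX V₂ q + W₂ q * Dd eY W₁ q) = 0 := by
      simp only [hJ'def]
      linear_combination (Dd eY u₂ q) * cp1 - (Dd eY u₁ q) * cp2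
    exact (mul_eq_zero.mp hk).resolve_left (hJne q hq)
  have hG2 : Dd eT1 W₂ q + Dd eT2 V₁ q - V₁ q * Dd eY W₂ q - V₂ q * Dd eX V₁ q
      + W₁ q * Dd eX W₂ q + W₂ q * Dd eY V₁ q = 0 := by
    have hk : J' q * (Dd eT1 W₂ q + Dd eT2 V₁ q - V₁ q * Dd eY W₂ q - V₂ q * Dd eX V₁ q
        + W₁ q * Dd eX W₂ q + W₂ q * Dd eY V₁ q) = 0 := by
      simp only [hJ'def]
      linear_combination (Dd eX u₂ q) * cp1 - (Dd eX u₁ q) * cp2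
    exact (mul_eq_zero.mp hk).resolve_left (hJne q hq)
  -- translate the goal into the `Dd` language
  have hV₁fun : brX u₁ u₂ =ᶠ[𝓝 q] V₁ :=
    eventuallyEq_of_mem (hΩ.mem_nhds hq) (fun p hp => hbrX p hp)
  have hW₁fun : sqX u₁ u₂ =ᶠ[𝓝 q] W₁ :=
    eventuallyEq_of_mem (hΩ.mem_nhds hq) (fun p hp => hsqX p hp)
  have hV₂fun : brY u₁ u₂ =ᶠ[𝓝 q] V₂ :=
    eventuallyEq_of_mem (hΩ.mem_nhds hq) (fun p hp => hbrY p hp)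
  have hW₂fun : sqY u₁ u₂ =ᶠ[𝓝 q] W₂ :=
    eventuallyEq_of_mem (hΩ.mem_nhds hq) (fun p hp => hsqY p hp)
  constructor
  · rw [pdT2_congr hW₁fun, pdT2_eq dW₁q, pdT1_congr hV₂fun, pdT1_eq dV₂q,
      pdY_congr hV₂fun, pdY_eq dV₂q, pdX_congr hW₁fun, pdX_eq dW₁q,
      pdX_congr hV₂fun, pdX_eq dV₂q, pdY_congr hW₁fun, pdY_eq dW₁q,
      hbrX q hq, hbrY q hq, hsqX q hq, hsqY q hq]
    exact hG1
  · rw [pdT1_congr hW₂fun, pdT1_eq dW₂q, pdT2_congr hV₁fun, pdT2_eq dV₁q,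
      pdY_congr hW₂fun, pdY_eq dW₂q, pdX_congr hV₁fun, pdX_eq dV₁q,
      pdX_congr hW₂fun, pdX_eq dW₂q, pdY_congr hV₁fun, pdY_eq dV₁q,
      hbrX q hq, hbrY q hq, hsqX q hq, hsqY q hq]
    exact hG2
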